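/- Let x̄ ∈ (0,1), ḡ > 0, p > 0, and set K = −1 − (1−x̄)·ln(x̄/(1−x̄)) − (ḡ/p)·(1 − ln ḡ). Define V(x, g) = x̄/x + (1−x̄)·ln(x/(1−x)) + (g − ḡ·ln g)/p + K for x ∈ (0,1) and g > 0. Then V(x, g) ≥ 0 for all x ∈ (0,1) and g > 0, and V(x, g) = 0 if and only if x = x̄ and g = ḡ; that is, V has a strict global minimum, equal to 0, at the point (x̄, ḡ). -/

import Mathlib

/-- The Lyapunov candidate `V(x, g) = xbar/x + (1−xbar)·ln(x/(1−x)) + (g − gbar·ln g)/p + K`. -/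
noncomputable def V (xbar gbar p K x g : ℝ) : ℝ :=
  xbar / x + (1 - xbar) * Real.log (x / (1 - x)) + (g - gbar * Real.log g) / p + K

/-- The `x`-part of `V` minus its value at `xbar` is nonnegative, strictly if `x ≠ xbar`. -/
lemma Apart_nonneg (xbar x : ℝ) (hb0 : 0 < xbar) (hb1 : xbar < 1)
    (hx0 : 0 < x) (hx1 : x < 1) :
    0 ≤ xbar / x + (1 - xbar) * Real.log (x / (1 - x))
      - 1 - (1 - xbar) * Real.log (xbar / (1 - xbar)) ∧
    (x ≠ xbar → 0 < xbar / x + (1 - xbar) * Real.log (x / (1 - x))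
      - 1 - (1 - xbar) * Real.log (xbar / (1 - xbar))) := by
  have h1x : 0 < 1 - x := by linarith
  have h1b : 0 < 1 - xbar := by linarith
  have e1 : Real.log (x / (1 - x)) = Real.log x - Real.log (1 - x) :=
    Real.log_div (ne_of_gt hx0) (ne_of_gt h1x)
  have e2 : Real.log (xbar / (1 - xbar)) = Real.log xbar - Real.log (1 - xbar) :=
    Real.log_div (ne_of_gt hb0) (ne_of_gt h1b)
  -- step 2 : xbar * (log x - log xbar) ≤ x - xbar
  have s2 : Real.log x - Real.log xbar ≤ x / xbar - 1 := by
    have := Real.log_le_sub_one_of_pos (div_pos hx0 hb0)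
    rwa [Real.log_div (ne_of_gt hx0) (ne_of_gt hb0)] at this
  have s2' : xbar * (Real.log x - Real.log xbar) ≤ x - xbar := by
    have := mul_le_mul_of_nonneg_left s2 (le_of_lt hb0)
    have hxx : xbar * (x / xbar - 1) = x - xbar := by field_simp
    linarith [hxx ▸ this]
  -- step 3 : (1-xbar) * (log (1-x) - log (1-xbar)) ≤ xbar - x
  have s3 : Real.log (1 - x) - Real.log (1 - xbar) ≤ (1 - x) / (1 - xbar) - 1 := by
    have := Real.log_le_sub_one_of_pos (div_pos h1x h1b)
    rwa [Real.log_div (ne_of_gt h1x) (ne_of_gt h1b)] at this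
  have s3' : (1 - xbar) * (Real.log (1 - x) - Real.log (1 - xbar)) ≤ xbar - x := by
    have := mul_le_mul_of_nonneg_left s3 (le_of_lt h1b)
    have hxx : (1 - xbar) * ((1 - x) / (1 - xbar) - 1) = xbar - x := by field_simp; ring
    linarith [hxx ▸ this]
  -- step 1 (weak) : log xbar - log x ≤ xbar / x - 1
  have s1 : Real.log xbar - Real.log x ≤ xbar / x - 1 := by
    have := Real.log_le_sub_one_of_pos (div_pos hb0 hx0)
    rwa [Real.log_div (ne_of_gt hb0) (ne_of_gt hx0)] at this
  constructor
  · rw [e1, e2]; nlinarith [s1, s2', s3']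
  · intro hne
    have s1' : Real.log xbar - Real.log x < xbar / x - 1 := by
      have hne1 : xbar / x ≠ 1 := by
        intro h
        exact hne (by field_simp at h; linarith)
      have := Real.log_lt_sub_one_of_pos (div_pos hb0 hx0) hne1
      rwa [Real.log_div (ne_of_gt hb0) (ne_of_gt hx0)] at this
    rw [e1, e2]; nlinarith [s1', s2', s3']

/-- The `g`-part: `g - gbar * log g - gbar + gbar * log gbar ≥ 0`, strictly if `g ≠ gbar`. -/
lemma Bpart_nonneg (gbar g : ℝ) (hb : 0 < gbar) (hg : 0 < g) :
    0 ≤ g - gbar * Real.log g - gbar + gbar * Real.log gbar ∧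
    (g ≠ gbar → 0 < g - gbar * Real.log g - gbar + gbar * Real.log gbar) := by
  have s : Real.log g - Real.log gbar ≤ g / gbar - 1 := by
    have := Real.log_le_sub_one_of_pos (div_pos hg hb)
    rwa [Real.log_div (ne_of_gt hg) (ne_of_gt hb)] at this
  have key : gbar * (g / gbar - 1) = g - gbar := by field_simp
  constructor
  · nlinarith [mul_le_mul_of_nonneg_left s (le_of_lt hb)]
  · intro hne
    have s' : Real.log g - Real.log gbar < g / gbar - 1 := by
      have hne1 : g / gbar ≠ 1 := by
        intro h; exact hne (by field_simp at h; linarith)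
      have := Real.log_lt_sub_one_of_pos (div_pos hg hb) hne1
      rwa [Real.log_div (ne_of_gt hg) (ne_of_gt hb)] at this
    nlinarith [mul_lt_mul_of_pos_left s' hb]

/-- With `K = −1 − (1−xbar)·ln(xbar/(1−xbar)) − (gbar/p)·(1 − ln gbar)`, the function `V` is
nonnegative on `(0,1) × (0,∞)` and vanishes exactly at `(xbar, gbar)`: it has a strict
global minimum, equal to `0`, at `(xbar, gbar)`. -/
theorem V_global_minimum (xbar gbar p K : ℝ) (hxbar : xbar ∈ Set.Ioo (0 : ℝ) 1)
    (hgbar : 0 < gbar) (hp : 0 < p)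
    (hK : K = -1 - (1 - xbar) * Real.log (xbar / (1 - xbar)) - gbar / p * (1 - Real.log gbar)) :
    (∀ x g : ℝ, x ∈ Set.Ioo (0 : ℝ) 1 → 0 < g → 0 ≤ V xbar gbar p K x g) ∧
    (∀ x g : ℝ, x ∈ Set.Ioo (0 : ℝ) 1 → 0 < g →
      (V xbar gbar p K x g = 0 ↔ x = xbar ∧ g = gbar)) := by
  obtain ⟨hb0, hb1⟩ := hxbar
  have hdecomp : ∀ x g : ℝ, 0 < x → x < 1 → 0 < g →
      V xbar gbar p K x g =
        (xbar / x + (1 - xbar) * Real.log (x / (1 - x))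
          - 1 - (1 - xbar) * Real.log (xbar / (1 - xbar)))
        + (g - gbar * Real.log g - gbar + gbar * Real.log gbar) / p := by
    intro x g hx0 hx1 hg
    rw [V, hK]; field_simp; ring
  have hA := fun x (hx0 : 0 < x) (hx1 : x < 1) => Apart_nonneg xbar x hb0 hb1 hx0 hx1
  have hB := fun g (hg : 0 < g) => Bpart_nonneg gbar g hgbar hg
  constructor
  · intro x g ⟨hx0, hx1⟩ hg
    rw [hdecomp x g hx0 hx1 hg]
    have := (hA x hx0 hx1).1
    have := (hB g hg).1
    positivity
  · intro x g ⟨hx0, hx1⟩ hg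
    constructor
    · intro h0
      rw [hdecomp x g hx0 hx1 hg] at h0
      by_contra hc
      rcases not_and_or.mp hc with hne | hne
      · have hAp := (hA x hx0 hx1).2 hne
        have hBn := (hB g hg).1
        have : 0 < (g - gbar * Real.log g - gbar + gbar * Real.log gbar) / p ∨
            0 ≤ (g - gbar * Real.log g - gbar + gbar * Real.log gbar) / p :=
          Or.inr (div_nonneg hBn (le_of_lt hp))
        rcases this with h | h <;> linarith
      · have hAn := (hA x hx0 hx1).1
        have hBp := (hB g hg).2 hne
        have : 0 < (g - gbar * Real.log g - gbar + gbar * Real.log gbar) / p :=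
          div_pos hBp hp
        linarith
    · rintro ⟨rfl, rfl⟩
      rw [hdecomp _ _ hx0 hx1 hg]
      field_simp; ring
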